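/- arXiv:1903.05716 — 5 statements merged into one kernel-verified Lean document; each statement's English description precedes it below -/
import Mathlib

section
/- Let μ be a probability measure on Y, A ⊆ Y measurable with μ(A) > 0, and 𝒫₁, 𝒫₂, 𝒫₃ finite measurable partitions of Y. For 0 < ε < 1, the relative ε-covering numbers satisfy COV_{μ, 2ε, 𝒫₁∨𝒫₂ | 𝒫₃}(A) ≤ COV_{μ, ε, 𝒫₁ | 𝒫₃}(A) · COV_{μ, ε, 𝒫₂ | 𝒫₃}(A). -/
open MeasureTheory

/-- `P` is a finite measurable partition of `Y`. -/
def IsPartition {Y : Type*} [MeasurableSpace Y] (P : Finset (Set Y)) : Prop :=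
  (∀ s ∈ P, MeasurableSet s) ∧ (⋃ s ∈ P, s) = Set.univ ∧
    ∀ s ∈ P, ∀ t ∈ P, s ≠ t → Disjoint s t

/-- The ε-covering number `COV_{μ,ε,P}(A)`: the least cardinality of a subfamily
`G ⊆ P` whose union covers at least a `(1−ε)`-fraction of the measure of `A`. -/
noncomputable def covNum {Y : Type*} [MeasurableSpace Y] (μ : Measure Y) (ε : ℝ)
    (P : Finset (Set Y)) (A : Set Y) : ℕ :=
  sInf {m | ∃ G ⊆ P, G.card = m ∧
    μ ((⋃ s ∈ G, s) ∩ A) ≥ (1 - ENNReal.ofReal ε) * μ A}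

/-- The relative ε-covering number `COV_{μ,ε,P|Q}(A)`: the minimum over subfamilies
`Q' ⊆ Q` covering a `(1−ε)`-fraction of `A` of `max_{q ∈ Q'} COV_{μ,ε,P}(A ∩ q)`. -/
noncomputable def relCovNum {Y : Type*} [MeasurableSpace Y] (μ : Measure Y) (ε : ℝ)
    (P Q : Finset (Set Y)) (A : Set Y) : ℕ :=
  sInf {m | ∃ Q' ⊆ Q, μ ((⋃ s ∈ Q', s) ∩ A) ≥ (1 - ENNReal.ofReal ε) * μ A ∧
    ∀ q ∈ Q', covNum μ ε P (A ∩ q) ≤ m}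

/-- The join (common refinement) of two finite partitions. -/
noncomputable def joinP {Y : Type*} (P Q : Finset (Set Y)) : Finset (Set Y) :=
  @Finset.image _ _ (Classical.decEq _) (fun pq => pq.1 ∩ pq.2) (P ×ˢ Q)

/-!
If `Q₁, Q₂ ⊆ 𝒫₃` witness the two relative covering numbers on the right, then `Q₁ ∩ Q₂` witnesses
the left one: since the cells of `𝒫₃` are disjoint, `⋃ Q₁ ∩ ⋃ Q₂ = ⋃ (Q₁ ∩ Q₂)`, and two sets each
missing at most an `ε`-fraction of `A` together miss at most a `2ε`-fraction. On each cell `q`, the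
cells `p₁ ∩ p₂` with `p₁, p₂` taken from optimal covers of `A ∩ q` by `𝒫₁` and by `𝒫₂` form a
`2ε`-cover by `𝒫₁ ∨ 𝒫₂` of size at most the product, for the same reason.
-/

open Set
open scoped ENNReal

section CoverArithmetic

variable {Y : Type*} [MeasurableSpace Y] {μ : Measure Y} [IsFiniteMeasure μ]
  {B U U₁ U₂ : Set Y} {e : ℝ≥0∞}

lemma measure_diff_le_of_le_measure_inter (hU : MeasurableSet U)
    (h : (1 - e) * μ B ≤ μ (U ∩ B)) : μ (B \ U) ≤ e * μ B := by
  refine ENNReal.le_of_add_le_add_left (measure_ne_top μ (B ∩ U)) ?_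
  calc μ (B ∩ U) + μ (B \ U) = μ B := measure_inter_add_sdiff B hU
    _ ≤ (1 - e) * μ B + e * μ B := by
      rw [← add_mul]; exact le_mul_of_one_le_left' le_tsub_add
    _ ≤ μ (B ∩ U) + e * μ B := by rw [inter_comm]; gcongr

lemma le_measure_inter_inter (hU₁ : MeasurableSet U₁) (hU₂ : MeasurableSet U₂)
    (h₁ : (1 - e) * μ B ≤ μ (U₁ ∩ B)) (h₂ : (1 - e) * μ B ≤ μ (U₂ ∩ B)) :
    (1 - 2 * e) * μ B ≤ μ ((U₁ ∩ U₂) ∩ B) := by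
  rw [ENNReal.sub_mul fun _ _ ↦ measure_ne_top μ B, one_mul, tsub_le_iff_right, inter_comm]
  calc μ B = μ (B ∩ (U₁ ∩ U₂)) + μ (B \ (U₁ ∩ U₂)) :=
        (measure_inter_add_sdiff B (hU₁.inter hU₂)).symm
    _ ≤ μ (B ∩ (U₁ ∩ U₂)) + (μ (B \ U₁) + μ (B \ U₂)) := by
      rw [sdiff_inter]; gcongr; exact measure_union_le _ _
    _ ≤ μ (B ∩ (U₁ ∩ U₂)) + 2 * e * μ B := by
      rw [mul_assoc, two_mul]
      gcongr
      · exact measure_diff_le_of_le_measure_inter hU₁ h₁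
      · exact measure_diff_le_of_le_measure_inter hU₂ h₂

end CoverArithmetic

section Partitions

variable {Y : Type*}

lemma biUnion_inter_biUnion_subset_biUnion_inter {P Q₁ Q₂ : Finset (Set Y)}
    (hP : (P : Set (Set Y)).Pairwise Disjoint) (hQ₁ : Q₁ ⊆ P) (hQ₂ : Q₂ ⊆ P) :
    (⋃ s ∈ Q₁, s) ∩ (⋃ s ∈ Q₂, s) ⊆ ⋃ s ∈ Q₁ ∩ Q₂, s := by
  rintro x ⟨hx₁, hx₂⟩
  simp only [mem_iUnion, exists_prop] at hx₁ hx₂ ⊢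
  obtain ⟨q₁, hq₁, hxq₁⟩ := hx₁
  obtain ⟨q₂, hq₂, hxq₂⟩ := hx₂
  obtain rfl : q₁ = q₂ := by
    by_contra hne
    exact (hP (hQ₁ hq₁) (hQ₂ hq₂) hne).ne_of_mem hxq₁ hxq₂ rfl
  exact ⟨q₁, Finset.mem_inter.mpr ⟨hq₁, hq₂⟩, hxq₁⟩

lemma joinP_mono {P₁ P₂ G₁ G₂ : Finset (Set Y)} (h₁ : G₁ ⊆ P₁) (h₂ : G₂ ⊆ P₂) :
    joinP G₁ G₂ ⊆ joinP P₁ P₂ :=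
  Finset.image_subset_image (Finset.product_subset_product h₁ h₂)

lemma card_joinP_le (G₁ G₂ : Finset (Set Y)) : (joinP G₁ G₂).card ≤ G₁.card * G₂.card :=
  Finset.card_image_le.trans (Finset.card_product G₁ G₂).le

lemma biUnion_joinP (G₁ G₂ : Finset (Set Y)) :
    ⋃ s ∈ joinP G₁ G₂, s = (⋃ s ∈ G₁, s) ∩ (⋃ s ∈ G₂, s) := by
  ext x
  simp only [joinP, Finset.mem_image, Finset.mem_product, mem_iUnion, mem_inter_iff, exists_prop]
  constructor
  · rintro ⟨-, ⟨⟨p, r⟩, ⟨hp, hr⟩, rfl⟩, hxp, hxr⟩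
    exact ⟨⟨p, hp, hxp⟩, ⟨r, hr, hxr⟩⟩
  · rintro ⟨⟨p, hp, hxp⟩, ⟨r, hr, hxr⟩⟩
    exact ⟨p ∩ r, ⟨⟨p, r⟩, ⟨hp, hr⟩, rfl⟩, hxp, hxr⟩

end Partitions

section CoveringNumbers

variable {Y : Type*} [MeasurableSpace Y] {μ : Measure Y} {ε : ℝ} {A : Set Y}

lemma covNum_le {P G : Finset (Set Y)} (hG : G ⊆ P)
    (hcov : μ ((⋃ s ∈ G, s) ∩ A) ≥ (1 - ENNReal.ofReal ε) * μ A) :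
    covNum μ ε P A ≤ G.card :=
  Nat.sInf_le ⟨G, hG, rfl, hcov⟩

variable (μ ε A) in
lemma exists_card_eq_covNum {P : Finset (Set Y)} (hP : ⋃ s ∈ P, s = univ) :
    ∃ G ⊆ P, G.card = covNum μ ε P A ∧
      μ ((⋃ s ∈ G, s) ∩ A) ≥ (1 - ENNReal.ofReal ε) * μ A :=
  Nat.sInf_mem (s := {m | ∃ G ⊆ P, G.card = m ∧
    μ ((⋃ s ∈ G, s) ∩ A) ≥ (1 - ENNReal.ofReal ε) * μ A}) ⟨P.card, P, subset_rfl, rfl, by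
    rw [hP, univ_inter]; exact mul_le_of_le_one_left' tsub_le_self⟩

lemma relCovNum_le {P Q Q' : Finset (Set Y)} {m : ℕ} (hQ' : Q' ⊆ Q)
    (hcov : μ ((⋃ s ∈ Q', s) ∩ A) ≥ (1 - ENNReal.ofReal ε) * μ A)
    (hm : ∀ q ∈ Q', covNum μ ε P (A ∩ q) ≤ m) :
    relCovNum μ ε P Q A ≤ m :=
  Nat.sInf_le ⟨Q', hQ', hcov, hm⟩

variable (μ ε A) in
lemma exists_relCovNum_spec (P : Finset (Set Y)) {Q : Finset (Set Y)}
    (hQ : ⋃ s ∈ Q, s = univ) :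
    ∃ Q' ⊆ Q, μ ((⋃ s ∈ Q', s) ∩ A) ≥ (1 - ENNReal.ofReal ε) * μ A ∧
      ∀ q ∈ Q', covNum μ ε P (A ∩ q) ≤ relCovNum μ ε P Q A :=
  Nat.sInf_mem (s := {m | ∃ Q' ⊆ Q, μ ((⋃ s ∈ Q', s) ∩ A) ≥ (1 - ENNReal.ofReal ε) * μ A ∧
    ∀ q ∈ Q', covNum μ ε P (A ∩ q) ≤ m}) ⟨Q.sup fun q ↦ covNum μ ε P (A ∩ q), Q, subset_rfl,
    by rw [hQ, univ_inter]; exact mul_le_of_le_one_left' tsub_le_self,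
    fun _ hq ↦ Finset.le_sup (f := fun q ↦ covNum μ ε P (A ∩ q)) hq⟩

lemma le_measure_biUnion_inter_biUnion_inter [IsFiniteMeasure μ] {P₁ P₂ G₁ G₂ : Finset (Set Y)}
    (hP₁m : ∀ s ∈ P₁, MeasurableSet s) (hP₂m : ∀ s ∈ P₂, MeasurableSet s)
    (hG₁ : G₁ ⊆ P₁) (hG₂ : G₂ ⊆ P₂)
    (h₁ : μ ((⋃ s ∈ G₁, s) ∩ A) ≥ (1 - ENNReal.ofReal ε) * μ A)
    (h₂ : μ ((⋃ s ∈ G₂, s) ∩ A) ≥ (1 - ENNReal.ofReal ε) * μ A) :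
    μ (((⋃ s ∈ G₁, s) ∩ ⋃ s ∈ G₂, s) ∩ A) ≥ (1 - ENNReal.ofReal (2 * ε)) * μ A := by
  rw [ENNReal.ofReal_mul zero_le_two, ENNReal.ofReal_ofNat]
  exact le_measure_inter_inter (Finset.measurableSet_biUnion _ fun s hs ↦ hP₁m s (hG₁ hs))
    (Finset.measurableSet_biUnion _ fun s hs ↦ hP₂m s (hG₂ hs)) h₁ h₂

lemma covNum_joinP_le [IsFiniteMeasure μ] {P₁ P₂ : Finset (Set Y)}
    (hP₁m : ∀ s ∈ P₁, MeasurableSet s) (hP₂m : ∀ s ∈ P₂, MeasurableSet s)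
    (hP₁ : ⋃ s ∈ P₁, s = univ) (hP₂ : ⋃ s ∈ P₂, s = univ) :
    covNum μ (2 * ε) (joinP P₁ P₂) A ≤ covNum μ ε P₁ A * covNum μ ε P₂ A := by
  obtain ⟨G₁, hG₁, hcard₁, hcov₁⟩ := exists_card_eq_covNum μ ε A hP₁
  obtain ⟨G₂, hG₂, hcard₂, hcov₂⟩ := exists_card_eq_covNum μ ε A hP₂
  calc covNum μ (2 * ε) (joinP P₁ P₂) A ≤ (joinP G₁ G₂).card := by
        refine covNum_le (joinP_mono hG₁ hG₂) ?_
        rw [biUnion_joinP]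
        exact le_measure_biUnion_inter_biUnion_inter hP₁m hP₂m hG₁ hG₂ hcov₁ hcov₂
    _ ≤ G₁.card * G₂.card := card_joinP_le G₁ G₂
    _ = covNum μ ε P₁ A * covNum μ ε P₂ A := by rw [hcard₁, hcard₂]

end CoveringNumbers

theorem stmt3_general {Y : Type*} [MeasurableSpace Y] (μ : Measure Y) [IsProbabilityMeasure μ]
    (A : Set Y)
    (P₁ P₂ P₃ : Finset (Set Y))
    (hP₁ : IsPartition P₁) (hP₂ : IsPartition P₂) (hP₃ : IsPartition P₃)
    (ε : ℝ) :
    relCovNum μ (2 * ε) (joinP P₁ P₂) P₃ A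
      ≤ relCovNum μ ε P₁ P₃ A * relCovNum μ ε P₂ P₃ A := by
  obtain ⟨Q₁, hQ₁, hcov₁, hbd₁⟩ := exists_relCovNum_spec μ ε A P₁ hP₃.2.1
  obtain ⟨Q₂, hQ₂, hcov₂, hbd₂⟩ := exists_relCovNum_spec μ ε A P₂ hP₃.2.1
  refine relCovNum_le (Q' := Q₁ ∩ Q₂) (Finset.inter_subset_left.trans hQ₁) ?_ fun q hq ↦ ?_
  · refine le_trans ?_ (measure_mono (inter_subset_inter_left A
      (biUnion_inter_biUnion_subset_biUnion_inter hP₃.2.2 hQ₁ hQ₂)))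
    exact le_measure_biUnion_inter_biUnion_inter hP₃.1 hP₃.1 hQ₁ hQ₂ hcov₁ hcov₂
  · obtain ⟨hq₁, hq₂⟩ := Finset.mem_inter.mp hq
    exact (covNum_joinP_le hP₁.1 hP₂.1 hP₁.2.1 hP₂.2.1).trans
      (Nat.mul_le_mul (hbd₁ q hq₁) (hbd₂ q hq₂))

theorem stmt3 {Y : Type*} [MeasurableSpace Y] (μ : Measure Y) [IsProbabilityMeasure μ]
    (A : Set Y) (hA : MeasurableSet A) (hApos : 0 < μ A)
    (P₁ P₂ P₃ : Finset (Set Y))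
    (hP₁ : IsPartition P₁) (hP₂ : IsPartition P₂) (hP₃ : IsPartition P₃)
    (ε : ℝ) (hε : 0 < ε) (hε1 : ε < 1) :
    relCovNum μ (2 * ε) (joinP P₁ P₂) P₃ A
      ≤ relCovNum μ ε P₁ P₃ A * relCovNum μ ε P₂ P₃ A :=
  stmt3_general μ A P₁ P₂ P₃ hP₁ hP₂ hP₃ ε
end

section
/- Let μ be a probability measure on Y, A ⊆ Y measurable with μ(A) > 0, and 𝒫₁, 𝒫₂, 𝒫₃ finite measurable partitions. For 0 < ε < 1, COV_{μ, ε, 𝒫₁ | 𝒫₃}(A) ≤ COV_{μ, ε²/6, 𝒫₁ | 𝒫₂}(A) · COV_{μ, ε²/6, 𝒫₂ | 𝒫₃}(A). -/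
open MeasureTheory

/-!
Put `δ = ε²/6` and `c = ε - δ`, so that `δ + c = ε` and `2δ ≤ c²`. Fix optimal witnesses for the
two relative covering numbers at level `δ`. The points of `A` missed by the `P₁ | P₂` witness form
an exceptional set `E` with `μ E ≤ 2δ μ(A) ≤ c² μ(A)`, so by Markov's inequality the cells `r` of
the `P₂ | P₃` witness with `μ(E ∩ r) > c μ(A ∩ r)` carry total mass at most `c μ(A)`. On each
remaining cell `r`, the `P₁`-covers of those `P₂`-cells that cover `A ∩ r` together cover `A ∩ r`
up to relative mass `δ + c = ε`, and there are at most the product of the two numbers of them.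
-/

open scoped ENNReal

section

variable {Y : Type*} [MeasurableSpace Y] {μ : Measure Y}

lemma le_measure_inter_iff_measure_diff_le {U B : Set Y} {c : ℝ≥0∞} (hU : MeasurableSet U)
    (hB : μ B ≠ ∞) : (1 - c) * μ B ≤ μ (U ∩ B) ↔ μ (B \ U) ≤ c * μ B := by
  have hUB : μ (U ∩ B) = μ B - μ (B \ U) := by
    rw [Set.inter_comm]
    exact ENNReal.eq_sub_of_add_eq (measure_ne_top_of_subset Set.sdiff_subset hB)
      (measure_inter_add_sdiff B hU)
  rw [hUB, ENNReal.sub_mul fun _ _ => hB, one_mul,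
    ENNReal.sub_le_sub_iff_left (measure_mono Set.sdiff_subset) hB]

lemma sum_measure_inter_le [SFinite μ] {Q : Finset (Set Y)}
    (hQd : (Q : Set (Set Y)).PairwiseDisjoint id) (hQm : ∀ q ∈ Q, MeasurableSet q) (A : Set Y) :
    ∑ q ∈ Q, μ (A ∩ q) ≤ μ A := by
  set T := toMeasurable μ A
  calc ∑ q ∈ Q, μ (A ∩ q)
      = ∑ q ∈ Q, μ (T ∩ q) :=
        Finset.sum_congr rfl fun q hq => (Measure.measure_toMeasurable_inter_of_sFinite (hQm q hq) A).symm
    _ = μ (⋃ q ∈ Q, T ∩ q) :=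
        (measure_biUnion_finset (hQd.mono fun _ => Set.inter_subset_right)
          fun q hq => (measurableSet_toMeasurable μ A).inter (hQm q hq)).symm
    _ ≤ μ T := measure_mono (Set.iUnion₂_subset fun _ _ => Set.inter_subset_left)
    _ = μ A := measure_toMeasurable A

end

namespace IsPartition

variable {Y : Type*} [MeasurableSpace Y] {P Q G : Finset (Set Y)}

lemma pairwiseDisjoint (hP : IsPartition P) : (P : Set (Set Y)).PairwiseDisjoint id :=
  fun s hs t ht hst => hP.2.2 s hs t ht hst

lemma measurableSet_biUnion (hP : IsPartition P) (hG : G ⊆ P) : MeasurableSet (⋃ s ∈ G, s) :=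
  .biUnion G.countable_toSet fun s hs => hP.1 s (hG hs)

variable {μ : Measure Y} [IsFiniteMeasure μ] {ε : ℝ}

lemma covNum_le_card (hP : IsPartition P) (hG : G ⊆ P) {B : Set Y}
    (h : μ (B \ ⋃ s ∈ G, s) ≤ ENNReal.ofReal ε * μ B) : covNum μ ε P B ≤ G.card :=
  Nat.sInf_le ⟨G, hG, rfl,
    (le_measure_inter_iff_measure_diff_le (hP.measurableSet_biUnion hG) (measure_ne_top μ B)).2 h⟩

lemma exists_card_eq_covNum (hP : IsPartition P) (B : Set Y) :
    ∃ G ⊆ P, G.card = covNum μ ε P B ∧ μ (B \ ⋃ s ∈ G, s) ≤ ENNReal.ofReal ε * μ B := by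
  have hP_mem : P.card ∈ {m | ∃ G ⊆ P, G.card = m ∧
      μ ((⋃ s ∈ G, s) ∩ B) ≥ (1 - ENNReal.ofReal ε) * μ B} :=
    ⟨P, subset_rfl, rfl, by rw [hP.2.1, Set.univ_inter]; exact mul_le_of_le_one_left' tsub_le_self⟩
  obtain ⟨G, hG, hcard, hcov⟩ := Nat.sInf_mem ⟨_, hP_mem⟩
  exact ⟨G, hG, hcard,
    (le_measure_inter_iff_measure_diff_le (hP.measurableSet_biUnion hG) (measure_ne_top μ B)).1 hcov⟩

lemma relCovNum_le (hQ : IsPartition Q) {Q' : Finset (Set Y)} (hQ' : Q' ⊆ Q) {A : Set Y}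
    (hA : μ (A \ ⋃ q ∈ Q', q) ≤ ENNReal.ofReal ε * μ A) {m : ℕ}
    (hm : ∀ q ∈ Q', covNum μ ε P (A ∩ q) ≤ m) : relCovNum μ ε P Q A ≤ m :=
  Nat.sInf_le ⟨Q', hQ',
    (le_measure_inter_iff_measure_diff_le (hQ.measurableSet_biUnion hQ') (measure_ne_top μ A)).2 hA,
    hm⟩

lemma exists_of_relCovNum (hP : IsPartition P) (hQ : IsPartition Q) (A : Set Y) :
    ∃ Q' ⊆ Q, μ (A \ ⋃ q ∈ Q', q) ≤ ENNReal.ofReal ε * μ A ∧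
      ∀ q ∈ Q', ∃ G ⊆ P, G.card ≤ relCovNum μ ε P Q A ∧
        μ ((A ∩ q) \ ⋃ s ∈ G, s) ≤ ENNReal.ofReal ε * μ (A ∩ q) := by
  have hQ_mem : Q.sup (fun q => covNum μ ε P (A ∩ q)) ∈ {m | ∃ Q' ⊆ Q,
      μ ((⋃ s ∈ Q', s) ∩ A) ≥ (1 - ENNReal.ofReal ε) * μ A ∧
      ∀ q ∈ Q', covNum μ ε P (A ∩ q) ≤ m} :=
    ⟨Q, subset_rfl, by rw [hQ.2.1, Set.univ_inter]; exact mul_le_of_le_one_left' tsub_le_self, fun q hq => Finset.le_sup (f := fun q => covNum μ ε P (A ∩ q)) hq⟩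
  obtain ⟨Q', hQ', hcov, hm⟩ := Nat.sInf_mem ⟨_, hQ_mem⟩
  refine ⟨Q', hQ',
    (le_measure_inter_iff_measure_diff_le (hQ.measurableSet_biUnion hQ') (measure_ne_top μ A)).1 hcov,
    fun q hq => ?_⟩
  obtain ⟨G, hG, hcard, hcov⟩ := hP.exists_card_eq_covNum (μ := μ) (ε := ε) (A ∩ q)
  exact ⟨G, hG, hcard ▸ hm q hq, hcov⟩

end IsPartition

section

variable {Y : Type*} [MeasurableSpace Y] {μ : Measure Y}

lemma measure_diff_biUnion_biUnion_le [DecidableEq (Set Y)] {P Q G : Finset (Set Y)}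
    (hP : (P : Set (Set Y)).PairwiseDisjoint id) (hQ : Q ⊆ P) (hG : G ⊆ P)
    (𝒢 : Set Y → Finset (Set Y)) {B : Set Y} {c d : ℝ≥0∞}
    (hBG : μ (B \ ⋃ q ∈ G, q) ≤ d * μ B)
    (hBQ : μ (B \ ⋃ q ∈ Q, (⋃ s ∈ 𝒢 q, s) ∩ q) ≤ c * μ B) :
    μ (B \ ⋃ s ∈ (G ∩ Q).biUnion 𝒢, s) ≤ (d + c) * μ B := by
  have hsub : B \ ⋃ s ∈ (G ∩ Q).biUnion 𝒢, s ⊆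
      (B \ ⋃ q ∈ G, q) ∪ (B \ ⋃ q ∈ Q, (⋃ s ∈ 𝒢 q, s) ∩ q) := by
    rintro x ⟨hxB, hxH⟩
    by_cases hxG : x ∈ ⋃ q ∈ G, q
    · right
      refine ⟨hxB, fun hxQ => hxH ?_⟩
      obtain ⟨q, hqG, hxq⟩ := Set.mem_iUnion₂.mp hxG
      obtain ⟨q', hq'Q, hxs, hxq'⟩ := Set.mem_iUnion₂.mp hxQ
      obtain rfl : q = q' := hP.elim (hG hqG) (hQ hq'Q) (Set.not_disjoint_iff.2 ⟨x, hxq, hxq'⟩)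
      obtain ⟨s, hs, hxs⟩ := Set.mem_iUnion₂.mp hxs
      exact Set.mem_iUnion₂.2 ⟨s, Finset.mem_biUnion.2 ⟨q, Finset.mem_inter.2 ⟨hqG, hq'Q⟩, hs⟩, hxs⟩
    · exact Or.inl ⟨hxB, hxG⟩
  calc μ (B \ ⋃ s ∈ (G ∩ Q).biUnion 𝒢, s)
      ≤ μ (B \ ⋃ q ∈ G, q) + μ (B \ ⋃ q ∈ Q, (⋃ s ∈ 𝒢 q, s) ∩ q) :=
        (measure_mono hsub).trans (measure_union_le _ _)
    _ ≤ (d + c) * μ B := by rw [add_mul]; exact add_le_add hBG hBQ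

variable [SFinite μ] {Q : Finset (Set Y)}

lemma measure_diff_biUnion_inter_le (hQd : (Q : Set (Set Y)).PairwiseDisjoint id)
    (hQm : ∀ q ∈ Q, MeasurableSet q) {A : Set Y} (U : Set Y → Set Y) {d : ℝ≥0∞}
    (hA : μ (A \ ⋃ q ∈ Q, q) ≤ d * μ A) (hU : ∀ q ∈ Q, μ ((A ∩ q) \ U q) ≤ d * μ (A ∩ q)) :
    μ (A \ ⋃ q ∈ Q, U q ∩ q) ≤ 2 * d * μ A := by
  have hsub : A \ ⋃ q ∈ Q, U q ∩ q ⊆ (A \ ⋃ q ∈ Q, q) ∪ ⋃ q ∈ Q, (A ∩ q) \ U q := by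
    rintro x ⟨hxA, hxU⟩
    by_cases hxQ : x ∈ ⋃ q ∈ Q, q
    · obtain ⟨q, hq, hxq⟩ := Set.mem_iUnion₂.mp hxQ
      exact Or.inr (Set.mem_iUnion₂.2
        ⟨q, hq, ⟨hxA, hxq⟩, fun hxUq => hxU (Set.mem_iUnion₂.2 ⟨q, hq, hxUq, hxq⟩)⟩)
    · exact Or.inl ⟨hxA, hxQ⟩
  calc μ (A \ ⋃ q ∈ Q, U q ∩ q)
      ≤ μ (A \ ⋃ q ∈ Q, q) + ∑ q ∈ Q, μ ((A ∩ q) \ U q) :=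
        (measure_mono hsub).trans ((measure_union_le _ _).trans
          (add_le_add le_rfl (measure_biUnion_finset_le _ _)))
    _ ≤ d * μ A + d * ∑ q ∈ Q, μ (A ∩ q) := by
        rw [Finset.mul_sum]; exact add_le_add hA (Finset.sum_le_sum hU)
    _ ≤ 2 * d * μ A := by
        rw [two_mul, add_mul]; gcongr; exact sum_measure_inter_le hQd hQm A

lemma mul_sum_measure_inter_le (hQd : (Q : Set (Set Y)).PairwiseDisjoint id)
    (hQm : ∀ q ∈ Q, MeasurableSet q) (A E : Set Y) (c : ℝ≥0∞) :
    c * ∑ q ∈ Q.filter (fun q => c * μ (A ∩ q) < μ (E ∩ q)), μ (A ∩ q) ≤ μ E := by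
  rw [Finset.mul_sum]
  calc ∑ q ∈ Q.filter (fun q => c * μ (A ∩ q) < μ (E ∩ q)), c * μ (A ∩ q)
      ≤ ∑ q ∈ Q.filter (fun q => c * μ (A ∩ q) < μ (E ∩ q)), μ (E ∩ q) :=
        Finset.sum_le_sum fun q hq => (Finset.mem_filter.1 hq).2.le
    _ ≤ μ E := sum_measure_inter_le (hQd.subset (Finset.filter_subset _ _))
        (fun q hq => hQm q (Finset.mem_filter.1 hq).1) E

lemma measure_diff_biUnion_filter_le (hQd : (Q : Set (Set Y)).PairwiseDisjoint id)
    (hQm : ∀ q ∈ Q, MeasurableSet q) {A E : Set Y} {c d : ℝ≥0∞} (hc₀ : c ≠ 0) (hc : c ≠ ∞)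
    (hA : μ (A \ ⋃ q ∈ Q, q) ≤ d * μ A) (hE : μ E ≤ c ^ 2 * μ A) :
    μ (A \ ⋃ q ∈ Q.filter (fun q => μ (E ∩ q) ≤ c * μ (A ∩ q)), q) ≤ (d + c) * μ A := by
  set Bad := Q.filter (fun q => c * μ (A ∩ q) < μ (E ∩ q))
  have hBad : ∑ q ∈ Bad, μ (A ∩ q) ≤ c * μ A := by
    rw [← ENNReal.mul_le_mul_iff_right hc₀ hc, ← mul_assoc, ← sq]
    exact (mul_sum_measure_inter_le hQd hQm A E c).trans hE
  have hsub : A \ ⋃ q ∈ Q.filter (fun q => μ (E ∩ q) ≤ c * μ (A ∩ q)), q ⊆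
      (A \ ⋃ q ∈ Q, q) ∪ ⋃ q ∈ Bad, A ∩ q := by
    rintro x ⟨hxA, hxGood⟩
    by_cases hxQ : x ∈ ⋃ q ∈ Q, q
    · obtain ⟨q, hq, hxq⟩ := Set.mem_iUnion₂.mp hxQ
      have hqBad : q ∈ Bad := Finset.mem_filter.2 ⟨hq, not_le.1 fun hgood =>
        hxGood (Set.mem_iUnion₂.2 ⟨q, Finset.mem_filter.2 ⟨hq, hgood⟩, hxq⟩)⟩
      exact Or.inr (Set.mem_iUnion₂.2 ⟨q, hqBad, hxA, hxq⟩)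
    · exact Or.inl ⟨hxA, hxQ⟩
  calc _ ≤ μ (A \ ⋃ q ∈ Q, q) + ∑ q ∈ Bad, μ (A ∩ q) :=
        (measure_mono hsub).trans ((measure_union_le _ _).trans
          (add_le_add le_rfl (measure_biUnion_finset_le _ _)))
    _ ≤ (d + c) * μ A := by rw [add_mul]; exact add_le_add hA hBad

end

theorem relCovNum_le_relCovNum_mul_relCovNum {Y : Type*} [MeasurableSpace Y] {μ : Measure Y}
    [IsFiniteMeasure μ] {P₁ P₂ P₃ : Finset (Set Y)} (hP₁ : IsPartition P₁)
    (hP₂ : IsPartition P₂) (hP₃ : IsPartition P₃) (A : Set Y) {δ ε : ℝ} (hδ : 0 ≤ δ)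
    (hδε : δ < ε) (hδε_sq : 2 * δ ≤ (ε - δ) ^ 2) :
    relCovNum μ ε P₁ P₃ A ≤ relCovNum μ δ P₁ P₂ A * relCovNum μ δ P₂ P₃ A := by
  classical
  set d := ENNReal.ofReal δ
  set c := ENNReal.ofReal (ε - δ)
  have hε : ENNReal.ofReal ε = d + c := by
    rw [← ENNReal.ofReal_add hδ (sub_nonneg.2 hδε.le), add_sub_cancel]
  have hdc : 2 * d ≤ c ^ 2 := by
    rw [← ENNReal.ofReal_pow (sub_nonneg.2 hδε.le), ← ENNReal.ofReal_ofNat 2,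
      ← ENNReal.ofReal_mul zero_le_two]
    exact ENNReal.ofReal_le_ofReal hδε_sq
  obtain ⟨Q₂, hQ₂P, hQ₂A, hQ₂⟩ := hP₁.exists_of_relCovNum hP₂ (μ := μ) (ε := δ) A
  choose! 𝒢 h𝒢P h𝒢card h𝒢 using hQ₂
  obtain ⟨Q₃, hQ₃P, hQ₃A, hQ₃⟩ := hP₂.exists_of_relCovNum hP₃ (μ := μ) (ε := δ) A
  choose! 𝒢' h𝒢'P h𝒢'card h𝒢' using hQ₃
  set E := A \ ⋃ q ∈ Q₂, (⋃ s ∈ 𝒢 q, s) ∩ q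
  have hE : μ E ≤ c ^ 2 * μ A :=
    (measure_diff_biUnion_inter_le (hP₂.pairwiseDisjoint.subset hQ₂P)
      (fun q hq => hP₂.1 q (hQ₂P hq)) _ hQ₂A h𝒢).trans (by gcongr)
  refine hP₃.relCovNum_le (Q' := Q₃.filter fun r => μ (E ∩ r) ≤ c * μ (A ∩ r))
    ((Finset.filter_subset _ _).trans hQ₃P) ?_ fun r hr => ?_
  · rw [hε]
    exact measure_diff_biUnion_filter_le (hP₃.pairwiseDisjoint.subset hQ₃P)
      (fun r hr => hP₃.1 r (hQ₃P hr)) (ENNReal.ofReal_pos.2 (sub_pos.2 hδε)).ne'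
      ENNReal.ofReal_ne_top hQ₃A hE
  obtain ⟨hrQ₃, hrE⟩ := Finset.mem_filter.1 hr
  set H := (𝒢' r ∩ Q₂).biUnion 𝒢
  have hHcard : H.card ≤ relCovNum μ δ P₁ P₂ A * relCovNum μ δ P₂ P₃ A := calc
    H.card ≤ (𝒢' r ∩ Q₂).card * relCovNum μ δ P₁ P₂ A :=
      Finset.card_biUnion_le_card_mul _ _ _ fun q hq => h𝒢card q (Finset.mem_inter.1 hq).2
    _ ≤ relCovNum μ δ P₂ P₃ A * relCovNum μ δ P₁ P₂ A := Nat.mul_le_mul_right _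
      ((Finset.card_le_card Finset.inter_subset_left).trans (h𝒢'card r hrQ₃))
    _ = _ := mul_comm _ _
  refine (hP₁.covNum_le_card
    (Finset.biUnion_subset.2 fun q hq => h𝒢P q (Finset.mem_inter.1 hq).2) ?_).trans hHcard
  rw [hε]
  refine measure_diff_biUnion_biUnion_le hP₂.pairwiseDisjoint hQ₂P (h𝒢'P r hrQ₃) 𝒢
    (h𝒢' r hrQ₃) ?_
  rwa [← Set.sdiff_inter_right_comm]

theorem stmt4_general {Y : Type*} [MeasurableSpace Y] (μ : Measure Y) [IsProbabilityMeasure μ]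
    (A : Set Y)
    (P₁ P₂ P₃ : Finset (Set Y))
    (hP₁ : IsPartition P₁) (hP₂ : IsPartition P₂) (hP₃ : IsPartition P₃)
    (ε : ℝ) (hε : 0 < ε) (hε1 : ε < 1) :
    relCovNum μ ε P₁ P₃ A
      ≤ relCovNum μ (ε ^ 2 / 6) P₁ P₂ A * relCovNum μ (ε ^ 2 / 6) P₂ P₃ A :=
  relCovNum_le_relCovNum_mul_relCovNum hP₁ hP₂ hP₃ A (by positivity) (by nlinarith)
    (by nlinarith)

theorem stmt4 {Y : Type*} [MeasurableSpace Y] (μ : Measure Y) [IsProbabilityMeasure μ]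
    (A : Set Y) (hA : MeasurableSet A) (hApos : 0 < μ A)
    (P₁ P₂ P₃ : Finset (Set Y))
    (hP₁ : IsPartition P₁) (hP₂ : IsPartition P₂) (hP₃ : IsPartition P₃)
    (ε : ℝ) (hε : 0 < ε) (hε1 : ε < 1) :
    relCovNum μ ε P₁ P₃ A
      ≤ relCovNum μ (ε ^ 2 / 6) P₁ P₂ A * relCovNum μ (ε ^ 2 / 6) P₂ P₃ A :=
  stmt4_general μ A P₁ P₂ P₃ hP₁ hP₂ hP₃ ε hε hε1
end

section
/- There exists a graph homomorphism τ from the standard Cayley graph of Z^d to itself such that: (1) for every i ∈ Z^d \ {0}, ‖τ(i)‖₁ < ‖i‖₁; (2) τ(0) = e₁; (3) for every i ∈ Z^d, τ(i) is adjacent to i; (4) for every n, if i, j ∈ Z^d are adjacent with i ∉ F_n and j ∈ F_n, then τ(i) = j, where F_n = {−n,…,n}^d. -/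
/-- Adjacency in the standard Cayley graph of `ℤ^d`: ℓ¹-distance one. -/
def adjZ {d : ℕ} (i j : Fin d → ℤ) : Prop := (∑ t, |i t - j t|) = 1

/-- The ℓ¹-norm on `ℤ^d`. -/
def norm1 {d : ℕ} (i : Fin d → ℤ) : ℤ := ∑ t, |i t|

/-- The box `F_n = {−n,…,n}^d`. -/
def boxF {d : ℕ} (n : ℕ) : Set (Fin d → ℤ) := {i | ∀ t, |i t| ≤ (n : ℤ)}

/-!
The map `τ = inwardStep` moves a nonzero point one step towards the origin along its leading
coordinate, the first coordinate of largest absolute value, and sends the origin to `e₁`. If `j`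
arises from `i` by lowering `|i s|` by one, then either `s` is the leading coordinate of `i` and
`τ i = j`, or `i` and `j` have the same leading coordinate and `τ` moves both of them in the same
way; either way `τ i` and `τ j` are adjacent. A point outside `F_n` adjacent to a point of `F_n`
has exactly one coordinate exceeding `n` in absolute value, which is then leading, so `τ` steps
into `F_n`.
-/

open Finset Function

section FirstArgmax

variable {ι α : Type*} [Fintype ι] [LinearOrder ι] [Nonempty ι] [LinearOrder α]

def firstArgmax (f : ι → α) : ι :=
  (univ.filter fun t => ∀ u, f u ≤ f t).min' <| by
    obtain ⟨t, -, ht⟩ := exists_max_image univ f univ_nonempty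
    exact ⟨t, mem_filter.2 ⟨mem_univ t, fun u => ht u (mem_univ u)⟩⟩

lemma le_apply_firstArgmax (f : ι → α) (u : ι) : f u ≤ f (firstArgmax f) :=
  (mem_filter.1 (min'_mem (univ.filter fun t => ∀ u, f u ≤ f t) _)).2 u

lemma firstArgmax_le {f : ι → α} {u : ι} (h : f (firstArgmax f) ≤ f u) : firstArgmax f ≤ u :=
  min'_le _ _ <| mem_filter.2 ⟨mem_univ u, fun v => (le_apply_firstArgmax f v).trans h⟩

lemma apply_lt_of_lt_firstArgmax {f : ι → α} {u : ι} (h : u < firstArgmax f) :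
    f u < f (firstArgmax f) :=
  lt_of_not_ge fun h' => (firstArgmax_le h').not_gt h

lemma firstArgmax_eq {f : ι → α} {t : ι} (hmax : ∀ u, f u ≤ f t)
    (hfirst : ∀ u < t, f u < f t) : firstArgmax f = t :=
  le_antisymm (firstArgmax_le (hmax _)) <| not_lt.1 fun h =>
    (hfirst _ h).not_ge (le_apply_firstArgmax f t)

lemma firstArgmax_update_of_le {f : ι → α} {s : ι} {b : α}
    (hs : s ≠ firstArgmax f) (hb : b ≤ f s) : firstArgmax (update f s b) = firstArgmax f := by
  apply firstArgmax_eq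
  · intro u
    rw [update_of_ne hs.symm]
    rcases eq_or_ne u s with rfl | hu
    · simpa using hb.trans (le_apply_firstArgmax f u)
    · simpa [hu] using le_apply_firstArgmax f u
  · intro u hu
    rw [update_of_ne hs.symm]
    rcases eq_or_ne u s with rfl | hus
    · simpa using hb.trans_lt (apply_lt_of_lt_firstArgmax hu)
    · simpa [hus] using apply_lt_of_lt_firstArgmax hu

end FirstArgmax

lemma abs_lt_abs_or_abs_lt_of_abs_sub_eq_one {a b : ℤ} (h : |a - b| = 1) :
    |b| < |a| ∨ |a| < |b| := by
  simp only [abs_eq_max_neg] at *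
  omega

lemma abs_sub_sign_add_one {a : ℤ} (ha : a ≠ 0) : |a - a.sign| + 1 = |a| := by
  rcases ha.lt_or_gt with h | h
  · rw [Int.sign_eq_neg_one_of_neg h]; simp only [abs_eq_max_neg]; omega
  · rw [Int.sign_eq_one_of_pos h]; simp only [abs_eq_max_neg]; omega

lemma eq_sub_sign_of_abs_sub_eq_one {a b : ℤ} (h : |a - b| = 1) (hlt : |b| < |a|) :
    b = a - a.sign := by
  rcases lt_trichotomy a 0 with ha | rfl | ha
  · rw [Int.sign_eq_neg_one_of_neg ha]; simp only [abs_eq_max_neg] at *; omega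
  · simp only [abs_eq_max_neg] at *; omega
  · rw [Int.sign_eq_one_of_pos ha]; simp only [abs_eq_max_neg] at *; omega

section Adjacency

variable {d : ℕ}

lemma sum_abs_sub_update (i : Fin d → ℤ) (s : Fin d) (b : ℤ) :
    ∑ t, |i t - update i s b t| = |i s - b| := by
  rw [sum_eq_single s (fun t _ ht => by simp [update_of_ne ht]) (by simp)]
  simp

lemma adjZ_update_iff {i : Fin d → ℤ} {s : Fin d} {b : ℤ} :
    adjZ i (update i s b) ↔ |i s - b| = 1 := by
  rw [adjZ, sum_abs_sub_update]

lemma adjZ_comm {i j : Fin d → ℤ} : adjZ i j ↔ adjZ j i := by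
  simp only [adjZ, abs_sub_comm]

lemma adjZ_iff_exists_update {i j : Fin d → ℤ} :
    adjZ i j ↔ ∃ s b, |i s - b| = 1 ∧ j = update i s b := by
  refine ⟨fun h => ?_, fun ⟨s, b, hb, hj⟩ => hj ▸ adjZ_update_iff.2 hb⟩
  obtain ⟨s, hs⟩ : ∃ s, i s ≠ j s := by
    by_contra! hij
    simp [adjZ, hij] at h
  have hsplit := add_sum_erase univ (fun t => |i t - j t|) (mem_univ s)
  have hrest : ∑ t ∈ univ.erase s, |i t - j t| = 0 := by
    have hs1 := Int.one_le_abs (sub_ne_zero.2 hs)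
    have hnonneg := sum_nonneg fun t (_ : t ∈ univ.erase s) => abs_nonneg (i t - j t)
    rw [adjZ] at h
    omega
  refine ⟨s, j s, by rw [adjZ] at h; omega, funext fun t => ?_⟩
  rcases eq_or_ne t s with rfl | ht
  · simp
  · have := (sum_eq_zero_iff_of_nonneg fun t _ => abs_nonneg (i t - j t)).1 hrest t
      (mem_erase.2 ⟨ht, mem_univ t⟩)
    rw [update_of_ne ht]
    linarith [abs_eq_zero.1 this]

lemma norm1_update_add (i : Fin d → ℤ) (s : Fin d) (b : ℤ) :
    norm1 (update i s b) + |i s| = norm1 i + |b| := by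
  have hi := add_sum_erase univ (fun t => |i t|) (mem_univ s)
  have hu := add_sum_erase univ (fun t => |update i s b t|) (mem_univ s)
  rw [sum_congr rfl fun t ht => by rw [update_of_ne (ne_of_mem_erase ht)]] at hu
  simp only [update_self] at hu
  rw [norm1, norm1, ← hi, ← hu]
  ring

end Adjacency

section InwardStep

variable {d : ℕ} [NeZero d]

def leadIdx (i : Fin d → ℤ) : Fin d := firstArgmax fun t => |i t|

lemma abs_le_abs_leadIdx (i : Fin d → ℤ) (u : Fin d) : |i u| ≤ |i (leadIdx i)| :=
  le_apply_firstArgmax (fun t => |i t|) u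

lemma leadIdx_eq_of_forall_abs_lt {i : Fin d → ℤ} {s : Fin d} (h : ∀ u ≠ s, |i u| < |i s|) :
    leadIdx i = s :=
  firstArgmax_eq (fun u => (eq_or_ne u s).elim (fun hu => hu ▸ le_rfl) fun hu => (h u hu).le)
    fun u hu => h u hu.ne

lemma apply_leadIdx_ne_zero {i : Fin d → ℤ} (hi : i ≠ 0) : i (leadIdx i) ≠ 0 := by
  obtain ⟨u, hu⟩ := Function.ne_iff.1 hi
  intro h
  have := abs_le_abs_leadIdx i u
  rw [h, abs_zero] at this
  exact hu (abs_nonpos_iff.1 this)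

lemma leadIdx_update_of_abs_le {i : Fin d → ℤ} {s : Fin d} {b : ℤ} (hs : s ≠ leadIdx i)
    (hb : |b| ≤ |i s|) : leadIdx (update i s b) = leadIdx i := by
  have habs : (fun t => |update i s b t|) = update (fun t => |i t|) s |b| :=
    funext (apply_update (fun _ => abs) i s b)
  rw [leadIdx, habs, firstArgmax_update_of_le hs hb, leadIdx]

def inwardStep (i : Fin d → ℤ) : Fin d → ℤ :=
  if i = 0 then Pi.single 0 1 else update i (leadIdx i) (i (leadIdx i) - (i (leadIdx i)).sign)

lemma inwardStep_zero : inwardStep (0 : Fin d → ℤ) = Pi.single 0 1 := if_pos rfl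

lemma inwardStep_of_ne_zero {i : Fin d → ℤ} (hi : i ≠ 0) :
    inwardStep i = update i (leadIdx i) (i (leadIdx i) - (i (leadIdx i)).sign) := if_neg hi

lemma adjZ_inwardStep_self (i : Fin d → ℤ) : adjZ (inwardStep i) i := by
  rw [adjZ_comm]
  rcases eq_or_ne i 0 with rfl | hi
  · rw [inwardStep_zero, Pi.single]
    exact adjZ_update_iff.2 (by simp)
  · rw [inwardStep_of_ne_zero hi]
    exact adjZ_update_iff.2 (by simp [Int.abs_sign_of_ne_zero (apply_leadIdx_ne_zero hi)])

lemma norm1_inwardStep_lt {i : Fin d → ℤ} (hi : i ≠ 0) : norm1 (inwardStep i) < norm1 i := by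
  have hupdate := norm1_update_add i (leadIdx i) (i (leadIdx i) - (i (leadIdx i)).sign)
  have hstep := abs_sub_sign_add_one (apply_leadIdx_ne_zero hi)
  rw [inwardStep_of_ne_zero hi]
  omega

lemma inwardStep_eq_update {i : Fin d → ℤ} {s : Fin d} {b : ℤ} (hs : leadIdx i = s)
    (hb : |i s - b| = 1) (hlt : |b| < |i s|) : inwardStep i = update i s b := by
  have hi : i ≠ 0 := fun h => (abs_nonneg b).not_gt (by simpa [h] using hlt)
  rw [inwardStep_of_ne_zero hi, hs, ← eq_sub_sign_of_abs_sub_eq_one hb hlt]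

lemma adjZ_inwardStep_update_of_abs_lt {i : Fin d → ℤ} {s : Fin d} {b : ℤ}
    (hb : |i s - b| = 1) (hlt : |b| < |i s|) :
    adjZ (inwardStep i) (inwardStep (update i s b)) := by
  by_cases hs : leadIdx i = s
  · rw [inwardStep_eq_update hs hb hlt, adjZ_comm]
    exact adjZ_inwardStep_self _
  have hi : i ≠ 0 := fun h => (abs_nonneg b).not_gt (by simpa [h] using hlt)
  set m := leadIdx i
  have hlead : leadIdx (update i s b) = m := leadIdx_update_of_abs_le (Ne.symm hs) hlt.le
  have hj : update i s b ≠ 0 := fun h =>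
    apply_leadIdx_ne_zero hi (by simpa [update_of_ne hs] using congr_fun h m)
  rw [inwardStep_of_ne_zero hj, hlead, update_of_ne hs, update_comm (Ne.symm hs),
    ← inwardStep_of_ne_zero hi]
  refine adjZ_update_iff.2 ?_
  rwa [inwardStep_of_ne_zero hi, update_of_ne (Ne.symm hs)]

theorem adjZ_inwardStep {i j : Fin d → ℤ} (h : adjZ i j) : adjZ (inwardStep i) (inwardStep j) := by
  obtain ⟨s, b, hb, rfl⟩ := adjZ_iff_exists_update.1 h
  rcases abs_lt_abs_or_abs_lt_of_abs_sub_eq_one hb with hlt | hlt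
  · exact adjZ_inwardStep_update_of_abs_lt hb hlt
  · have := adjZ_inwardStep_update_of_abs_lt (i := update i s b) (s := s) (b := i s)
      (by rwa [update_self, abs_sub_comm]) (by rwa [update_self])
    rwa [update_idem, update_eq_self, adjZ_comm] at this

theorem inwardStep_eq_of_adjZ_of_notMem_boxF {n : ℕ} {i j : Fin d → ℤ} (h : adjZ i j)
    (hi : i ∉ boxF n) (hj : j ∈ boxF n) : inwardStep i = j := by
  obtain ⟨s, b, hb, rfl⟩ := adjZ_iff_exists_update.1 h
  obtain ⟨w, hw⟩ : ∃ w, (n : ℤ) < |i w| := by simpa [boxF] using hi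
  have hjb : ∀ u, |update i s b u| ≤ n := hj
  obtain rfl : w = s := by
    by_contra hws
    have := hjb w
    rw [update_of_ne hws] at this
    omega
  have hlt : |b| < |i w| := by simpa using (hjb w).trans_lt hw
  refine inwardStep_eq_update (leadIdx_eq_of_forall_abs_lt fun u hu => ?_) hb hlt
  simpa [update_of_ne hu] using (hjb u).trans_lt hw

end InwardStep

theorem stmt5 (d : ℕ) (hd : 0 < d) :
    ∃ τ : (Fin d → ℤ) → (Fin d → ℤ),
      (∀ i j, adjZ i j → adjZ (τ i) (τ j)) ∧
      (∀ i, i ≠ 0 → norm1 (τ i) < norm1 i) ∧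
      (τ 0 = fun t => if t = ⟨0, hd⟩ then 1 else 0) ∧
      (∀ i, adjZ (τ i) i) ∧
      (∀ n : ℕ, ∀ i j, adjZ i j → i ∉ boxF n → j ∈ boxF n → τ i = j) := by
  have : NeZero d := ⟨hd.ne'⟩
  refine ⟨inwardStep, fun _ _ => adjZ_inwardStep, fun _ => norm1_inwardStep_lt, ?_,
    adjZ_inwardStep_self, fun _ _ _ => inwardStep_eq_of_adjZ_of_notMem_boxF⟩
  have h0 : (0 : Fin d) = ⟨0, hd⟩ := Fin.ext (Fin.val_zero d)
  rw [inwardStep_zero, h0]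
  exact funext fun t => Pi.single_apply _ _ t
end

section
/- Let F ⊂ ℕ^d be a finite set of rectangular prototiles such that for some coordinate t, the side lengths {i_t : i ∈ F} in direction t are coprime (gcd equals 1), and all other coordinates of all tiles divide M, where M is the product of all side lengths of all tiles in F. Then there is a threshold depending only on F such that any rectangular box T_j whose side length j_t is an integer at least this threshold, and whose other side lengths are all multiples of M, can be perfectly tiled by translates of the prototiles {T_i : i ∈ F}. -/
def tileBoxN {d : ℕ} (l : Fin d → ℕ) : Set (Fin d → ℤ) :=
  {x | ∀ t, 1 ≤ x t ∧ x t ≤ (l t : ℤ)}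

def PerfectTiling {d : ℕ} (F : Finset (Fin d → ℕ)) (B : Set (Fin d → ℤ)) : Prop :=
  ∃ P : Set ((Fin d → ℤ) × (Fin d → ℕ)),
    (∀ p ∈ P, p.2 ∈ F) ∧
    (P.PairwiseDisjoint fun p => (fun y => p.1 + y) '' tileBoxN p.2) ∧
    (⋃ p ∈ P, (fun y => p.1 + y) '' tileBoxN p.2) = B

-- Bezout for Finset.gcd over ℕ, with ℤ coefficients
lemma my_bezout {ι : Type*} [DecidableEq ι] (F : Finset ι) (f : ι → ℕ) :
    ∃ z : ι → ℤ, ∑ i ∈ F, z i * (f i : ℤ) = ((F.gcd f : ℕ) : ℤ) := by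
  induction F using Finset.induction_on with
  | empty => exact ⟨0, by simp⟩
  | @insert a s ha ih =>
    obtain ⟨z, hz⟩ := ih
    classical
    refine ⟨Function.update (fun i => Nat.gcdB (f a) (s.gcd f) * z i) a (Nat.gcdA (f a) (s.gcd f)), ?_⟩
    rw [Finset.sum_insert ha, Finset.gcd_insert, Function.update_self]
    have h1 : ∑ i ∈ s, Function.update (fun i => Nat.gcdB (f a) (s.gcd f) * z i) a
        (Nat.gcdA (f a) (s.gcd f)) i * (f i : ℤ)
        = Nat.gcdB (f a) (s.gcd f) * ∑ i ∈ s, z i * (f i : ℤ) := by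
      rw [Finset.mul_sum]; apply Finset.sum_congr rfl; intro i hi
      rw [Function.update_of_ne (by rintro rfl; exact ha hi)]; ring
    rw [h1, hz]
    have hg : gcd (f a) (s.gcd f) = Nat.gcd (f a) (s.gcd f) := rfl
    rw [hg, Nat.gcd_eq_gcd_ab]
    ring

-- Frobenius: every large n is a nonneg combination
lemma my_frobenius {ι : Type*} [DecidableEq ι] (F : Finset ι) (f : ι → ℕ)
    (hpos : ∀ i ∈ F, 0 < f i) (h : F.gcd f = 1) :
    ∃ N : ℕ, ∀ n, N ≤ n → ∃ c : ι → ℕ, ∑ i ∈ F, c i * f i = n := by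
  have hne : F.Nonempty := by
    rcases F.eq_empty_or_nonempty with h0 | h0
    · rw [h0] at h; simp at h
    · exact h0
  obtain ⟨a, haF⟩ := hne
  obtain ⟨z, hz⟩ := my_bezout F f
  rw [h] at hz
  set A : ℕ := f a with hA
  have hA0 : 0 < A := hpos a haF
  have hAz : (A : ℤ) ≠ 0 := by exact_mod_cast hA0.ne'
  set S : ℕ := ∑ i ∈ F, f i with hS
  refine ⟨A * S, fun n hn => ?_⟩
  set q : ι → ℤ := fun i => ((n : ℤ) * z i) / (A : ℤ) with hq
  set r : ι → ℤ := fun i => ((n : ℤ) * z i) % (A : ℤ) with hr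
  have hr0 : ∀ i, 0 ≤ r i := fun i => Int.emod_nonneg _ hAz
  have hrA : ∀ i, r i < (A : ℤ) := fun i => Int.emod_lt_of_pos _ (by exact_mod_cast hA0)
  have hsplit : ∀ i, (n : ℤ) * z i = (A : ℤ) * q i + r i := fun i => (Int.mul_ediv_add_emod _ _).symm
  set w : ℤ := (n : ℤ) * z a + ∑ i ∈ F.erase a, q i * (f i : ℤ) with hw
  have key : (n : ℤ) = (∑ i ∈ F.erase a, r i * (f i : ℤ)) + w * (A : ℤ) := by
    have h2 : (n : ℤ) = ∑ i ∈ F, ((n : ℤ) * z i) * (f i : ℤ) := by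
      have : ∑ i ∈ F, ((n : ℤ) * z i) * (f i : ℤ) = (n : ℤ) * ∑ i ∈ F, z i * (f i : ℤ) := by
        rw [Finset.mul_sum]; apply Finset.sum_congr rfl; intro i _; ring
      rw [this, hz]; ring
    rw [← Finset.sum_erase_add _ _ haF] at h2
    have h3 : ∑ i ∈ F.erase a, ((n : ℤ) * z i) * (f i : ℤ)
        = ∑ i ∈ F.erase a, ((A : ℤ) * q i + r i) * (f i : ℤ) := by
      apply Finset.sum_congr rfl; intro i _; rw [← hsplit i]
    rw [h3] at h2
    rw [h2, hw]
    have h4 : ∑ i ∈ F.erase a, ((A : ℤ) * q i + r i) * (f i : ℤ)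
        = (∑ i ∈ F.erase a, q i * (f i : ℤ)) * (A : ℤ) + ∑ i ∈ F.erase a, r i * (f i : ℤ) := by
      rw [Finset.sum_mul, ← Finset.sum_add_distrib]
      apply Finset.sum_congr rfl; intro i _; ring
    rw [h4]
    simp only [hA]
    ring
  have hSb : ∑ i ∈ F.erase a, r i * (f i : ℤ) ≤ (A : ℤ) * S := by
    calc ∑ i ∈ F.erase a, r i * (f i : ℤ) ≤ ∑ i ∈ F.erase a, (A : ℤ) * (f i : ℤ) := by
          apply Finset.sum_le_sum; intro i _
          exact mul_le_mul_of_nonneg_right (le_of_lt (hrA i)) (by positivity)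
      _ ≤ ∑ i ∈ F, (A : ℤ) * (f i : ℤ) := by
          apply Finset.sum_le_sum_of_subset_of_nonneg (Finset.erase_subset a F)
          intro i _ _; positivity
      _ = (A : ℤ) * S := by rw [← Finset.mul_sum, hS]; push_cast; ring
  have hw0 : 0 ≤ w := by
    by_contra hcon
    push_neg at hcon
    have h4 : w * (A : ℤ) ≤ -1 * (A : ℤ) := by
      apply mul_le_mul_of_nonneg_right _ (by positivity)
      omega
    have h5 : (A * S : ℤ) ≤ (n : ℤ) := by exact_mod_cast hn
    push_cast at h5
    nlinarith [hA0, key, hSb]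
  refine ⟨fun i => if i = a then w.toNat else (r i).toNat, ?_⟩
  have hcsum : ∑ i ∈ F, ((if i = a then w.toNat else (r i).toNat : ℕ) : ℤ) * (f i : ℤ) = (n : ℤ) := by
    rw [← Finset.sum_erase_add _ _ haF]
    have e1 : ∑ i ∈ F.erase a, ((if i = a then w.toNat else (r i).toNat : ℕ) : ℤ) * (f i : ℤ)
        = ∑ i ∈ F.erase a, r i * (f i : ℤ) := by
      apply Finset.sum_congr rfl; intro i hi
      rw [if_neg (Finset.ne_of_mem_erase hi), Int.toNat_of_nonneg (hr0 i)]
    rw [e1, if_pos rfl, Int.toNat_of_nonneg hw0]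
    linarith [key]
  exact_mod_cast hcsum

lemma tileBoxN_eq_empty {d : ℕ} {l : Fin d → ℕ} {t : Fin d} (h : l t = 0) : tileBoxN l = ∅ := by
  ext x
  simp only [tileBoxN, Set.mem_setOf_eq, Set.mem_empty_iff_false, iff_false]
  intro hx
  have h1 := hx t
  rw [h] at h1
  simp only [Nat.cast_zero] at h1
  omega

lemma perfectTiling_empty {d : ℕ} (F : Finset (Fin d → ℕ)) :
    PerfectTiling F (∅ : Set (Fin d → ℤ)) :=
  ⟨∅, by simp, by simp, by simp⟩

lemma PerfectTiling.translate {d : ℕ} {F : Finset (Fin d → ℕ)} {B : Set (Fin d → ℤ)}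
    (h : PerfectTiling F B) (v : Fin d → ℤ) :
    PerfectTiling F ((fun x => v + x) '' B) := by
  obtain ⟨P, hPF, hPd, hPu⟩ := h
  have e : ∀ pp : (Fin d → ℤ) × (Fin d → ℕ),
      ((fun y => (v + pp.1) + y) '' tileBoxN pp.2)
        = (fun x => v + x) '' ((fun y => pp.1 + y) '' tileBoxN pp.2) := by
    intro pp; rw [← Set.image_comp]; apply Set.image_congr'; intro y
    simp [Function.comp, add_assoc]
  refine ⟨(fun p => (v + p.1, p.2)) '' P, ?_, ?_, ?_⟩
  · rintro p ⟨q, hq, rfl⟩; exact hPF q hq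
  · rintro p ⟨p', hp', rfl⟩ q ⟨q', hq', rfl⟩ hne
    have hne' : p' ≠ q' := fun hh => hne (by rw [hh])
    have hdis := hPd hp' hq' hne'
    simp only [Function.onFun] at hdis ⊢
    rw [e, e]
    exact (Set.disjoint_image_iff (add_right_injective v)).mpr hdis
  · rw [Set.biUnion_image]
    have : ⋃ p ∈ P, ((fun y => (v + p.1) + y) '' tileBoxN p.2)
        = ⋃ p ∈ P, (fun x => v + x) '' ((fun y => p.1 + y) '' tileBoxN p.2) := by
      apply Set.iUnion₂_congr; intro p hp; exact e p
    rw [this, ← Set.image_iUnion₂, hPu]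

lemma PerfectTiling.union {d : ℕ} {F : Finset (Fin d → ℕ)} {B₁ B₂ : Set (Fin d → ℤ)}
    (h₁ : PerfectTiling F B₁) (h₂ : PerfectTiling F B₂) (hd : Disjoint B₁ B₂) :
    PerfectTiling F (B₁ ∪ B₂) := by
  obtain ⟨P₁, hF₁, hd₁, hu₁⟩ := h₁
  obtain ⟨P₂, hF₂, hd₂, hu₂⟩ := h₂
  have tsub₁ : ∀ p ∈ P₁, ((fun y => p.1 + y) '' tileBoxN p.2) ⊆ B₁ := by
    intro p hp; rw [← hu₁]
    exact Set.subset_biUnion_of_mem (u := fun p => (fun y => p.1 + y) '' tileBoxN p.2) hp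
  have tsub₂ : ∀ p ∈ P₂, ((fun y => p.1 + y) '' tileBoxN p.2) ⊆ B₂ := by
    intro p hp; rw [← hu₂]
    exact Set.subset_biUnion_of_mem (u := fun p => (fun y => p.1 + y) '' tileBoxN p.2) hp
  refine ⟨P₁ ∪ P₂, ?_, ?_, ?_⟩
  · rintro p (hp | hp)
    exacts [hF₁ p hp, hF₂ p hp]
  · rintro p (hp | hp) q (hq | hq) hne <;> simp only [Function.onFun]
    · exact hd₁ hp hq hne
    · exact hd.mono (tsub₁ p hp) (tsub₂ q hq)
    · exact hd.symm.mono (tsub₂ p hp) (tsub₁ q hq)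
    · exact hd₂ hp hq hne
  · rw [Set.biUnion_union, hu₁, hu₂]

lemma one_dim_mem {a x k : ℤ} (ha : 0 < a) :
    (1 ≤ x - a * k ∧ x - a * k ≤ a) ↔ k = (x - 1) / a := by
  constructor
  · rintro ⟨h1, h2⟩
    have hr0 : 0 ≤ x - 1 - a * k := by omega
    have hra : x - 1 - a * k < a := by omega
    have hx : x - 1 = (x - 1 - a * k) + a * k := by ring
    have : (x - 1) / a = k := by
      rw [hx, Int.add_mul_ediv_left _ k ha.ne', Int.ediv_eq_zero_of_lt hr0 hra, zero_add]
    omega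
  · rintro rfl
    have h1 := Int.mul_ediv_add_emod (x - 1) a
    have h2 := Int.emod_nonneg (x - 1) ha.ne'
    have h3 := Int.emod_lt_of_pos (x - 1) ha
    constructor <;> omega

lemma perfectTiling_grid {d : ℕ} (F : Finset (Fin d → ℕ)) (i : Fin d → ℕ) (hiF : i ∈ F)
    (hipos : ∀ t, 0 < i t) (j : Fin d → ℕ) (hdvd : ∀ t, i t ∣ j t) :
    PerfectTiling F (tileBoxN j) := by
  choose m hm using hdvd
  have hipos' : ∀ t, (0 : ℤ) < (i t : ℤ) := fun t => by exact_mod_cast hipos t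
  have hmem : ∀ (k : Fin d → ℤ) (x : Fin d → ℤ),
      (x ∈ (fun y => (fun t => (i t : ℤ) * k t) + y) '' tileBoxN i) ↔
        ∀ t, k t = (x t - 1) / (i t : ℤ) := by
    intro k x
    constructor
    · rintro ⟨y, hy, rfl⟩ t
      have hyt := hy t
      apply (one_dim_mem (hipos' t)).mp
      have hb : (fun y => (fun t => (i t : ℤ) * k t) + y) y t = (i t : ℤ) * k t + y t := rfl
      rw [hb]
      constructor <;> omega
    · intro hk
      refine ⟨fun t => x t - (i t : ℤ) * k t, fun t => (one_dim_mem (hipos' t)).mpr (hk t), ?_⟩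
      funext t; simp
  refine ⟨{p | p.2 = i ∧ ∃ k : Fin d → ℤ, (∀ t, 0 ≤ k t ∧ k t < (m t : ℤ)) ∧
    p.1 = fun t => (i t : ℤ) * k t}, ?_, ?_, ?_⟩
  · rintro p ⟨hp2, _⟩; rw [hp2]; exact hiF
  · rintro ⟨o, w⟩ ⟨hw, k, hkr, ho⟩ ⟨o', w'⟩ ⟨hw', k', hkr', ho'⟩ hne
    simp only [Function.onFun]
    rw [Set.disjoint_left]
    rintro x hxp hxq
    simp only at hw hw' ho ho'
    subst hw hw' ho ho'
    have e1 := (hmem k x).mp hxp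
    have e2 := (hmem k' x).mp hxq
    apply hne
    have : k = k' := funext fun s => by rw [e1 s, e2 s]
    rw [this]
  · ext x
    simp only [Set.mem_iUnion, Set.mem_setOf_eq]
    constructor
    · rintro ⟨⟨o, w⟩, ⟨⟨hw, k, hkr, ho⟩, hx⟩⟩
      simp only at hw ho
      subst ho
      rw [hw] at hx
      intro s
      obtain ⟨y, hy, rfl⟩ := hx
      have hys : 1 ≤ y s ∧ y s ≤ (i s : ℤ) := hy s
      show 1 ≤ (i s : ℤ) * k s + y s ∧ (i s : ℤ) * k s + y s ≤ (j s : ℤ)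
      have hks := hkr s
      have hjm : (j s : ℤ) = (i s : ℤ) * (m s : ℤ) := by exact_mod_cast congrArg Nat.cast (hm s)
      have h1 : 0 ≤ (i s : ℤ) * k s := mul_nonneg (le_of_lt (hipos' s)) hks.1
      have h2 : (i s : ℤ) * (k s + 1) ≤ (i s : ℤ) * (m s : ℤ) :=
        mul_le_mul_of_nonneg_left (by omega) (le_of_lt (hipos' s))
      rw [hjm]  -- may fail
      constructor <;> nlinarith [hys.1, hys.2]
    · intro hx
      set k : Fin d → ℤ := fun t => (x t - 1) / (i t : ℤ) with hkdef
      refine ⟨((fun t => (i t : ℤ) * k t), i), ⟨rfl, k, ?_, rfl⟩, ?_⟩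
      · intro s
        have hxs := hx s
        have hjm : (j s : ℤ) = (i s : ℤ) * (m s : ℤ) := by exact_mod_cast congrArg Nat.cast (hm s)
        constructor
        · exact Int.ediv_nonneg (by omega) (le_of_lt (hipos' s))
        · rw [Int.ediv_lt_iff_lt_mul (hipos' s)]
          nlinarith [hxs.2]
      · exact (hmem _ x).mpr fun t => rfl

lemma tileBoxN_split {d : ℕ} (j : Fin d → ℕ) (t : Fin d) (n₁ n₂ : ℕ) (hj : j t = n₁ + n₂) :
    tileBoxN j = tileBoxN (Function.update j t n₁) ∪
      (fun x => (fun s => if s = t then (n₁ : ℤ) else 0) + x) ''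
        tileBoxN (Function.update j t n₂) ∧
    Disjoint (tileBoxN (Function.update j t n₁))
      ((fun x => (fun s => if s = t then (n₁ : ℤ) else 0) + x) ''
        tileBoxN (Function.update j t n₂)) := by
  set v : Fin d → ℤ := fun s => if s = t then (n₁ : ℤ) else 0 with hv
  have hmem1 : ∀ x : Fin d → ℤ, x ∈ tileBoxN (Function.update j t n₁) ↔
      ((∀ s, s ≠ t → (1 ≤ x s ∧ x s ≤ (j s : ℤ))) ∧ 1 ≤ x t ∧ x t ≤ (n₁ : ℤ)) := by
    intro x
    constructor
    · intro hx
      refine ⟨fun s hs => ?_, ?_⟩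
      · have := hx s; rwa [Function.update_of_ne hs] at this
      · have := hx t; rwa [Function.update_self] at this
    · rintro ⟨h1, h2⟩ s
      by_cases hs : s = t
      · subst hs; rwa [Function.update_self]
      · rw [Function.update_of_ne hs]; exact h1 s hs
  have hmem2 : ∀ x : Fin d → ℤ, x ∈ (fun x => v + x) '' tileBoxN (Function.update j t n₂) ↔
      ((∀ s, s ≠ t → (1 ≤ x s ∧ x s ≤ (j s : ℤ))) ∧
        (n₁ : ℤ) + 1 ≤ x t ∧ x t ≤ (n₁ : ℤ) + (n₂ : ℤ)) := by
    intro x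
    constructor
    · rintro ⟨y, hy, rfl⟩
      refine ⟨fun s hs => ?_, ?_⟩
      · have h1 := hy s
        rw [Function.update_of_ne hs] at h1
        have hvs : (v + y) s = 0 + y s := by rw [hv]; simp [hs]
        show 1 ≤ (v + y) s ∧ (v + y) s ≤ (j s : ℤ)
        rw [hvs]; omega
      · have h1 := hy t
        rw [Function.update_self] at h1
        have hvt : (v + y) t = (n₁ : ℤ) + y t := by rw [hv]; simp
        show (n₁ : ℤ) + 1 ≤ (v + y) t ∧ (v + y) t ≤ (n₁ : ℤ) + (n₂ : ℤ)
        rw [hvt]; omega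
    · rintro ⟨h1, h2⟩
      refine ⟨x - v, fun s => ?_, by simp⟩
      by_cases hs : s = t
      · subst hs
        rw [Function.update_self]
        have hvt : (x - v) s = x s - (n₁ : ℤ) := by rw [hv]; simp
        rw [hvt]; omega
      · rw [Function.update_of_ne hs]
        have hvs : (x - v) s = x s - 0 := by rw [hv]; simp [hs]
        rw [hvs]
        have := h1 s hs
        omega
  constructor
  · ext x
    rw [Set.mem_union, hmem1 x, hmem2 x]
    constructor
    · intro hx
      have hxt := hx t
      rw [hj] at hxt
      push_cast at hxt
      by_cases hc : x t ≤ (n₁ : ℤ)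
      · exact Or.inl ⟨fun s _ => hx s, (hx t).1, hc⟩
      · exact Or.inr ⟨fun s _ => hx s, by omega, by omega⟩
    · rintro (⟨h1, h2⟩ | ⟨h1, h2⟩) <;> intro s <;> by_cases hs : s = t
      · subst hs; rw [hj]; push_cast; omega
      · exact h1 s hs
      · subst hs; rw [hj]; push_cast; omega
      · exact h1 s hs
  · rw [Set.disjoint_left]
    intro x hx1 hx2
    have h1 := (hmem1 x).mp hx1
    have h2 := (hmem2 x).mp hx2
    omega

lemma perfectTiling_concat {d : ℕ} (F : Finset (Fin d → ℕ)) (j : Fin d → ℕ) (t : Fin d)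
    (n₁ n₂ : ℕ) (hj : j t = n₁ + n₂)
    (h₁ : PerfectTiling F (tileBoxN (Function.update j t n₁)))
    (h₂ : PerfectTiling F (tileBoxN (Function.update j t n₂))) :
    PerfectTiling F (tileBoxN j) := by
  obtain ⟨heq, hdis⟩ := tileBoxN_split j t n₁ n₂ hj
  rw [heq]
  exact h₁.union (h₂.translate _) hdis

lemma main_aux {d : ℕ} (F : Finset (Fin d → ℕ))
    (hFpos : ∀ i ∈ F, ∀ t, 0 < i t) (t : Fin d)
    (M : ℕ) (hM : M = F.prod fun i => ∏ t', i t') :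
    ∀ n : ℕ, ∀ c : (Fin d → ℕ) → ℕ, (∑ i ∈ F, c i * i t) = n →
      ∀ j : Fin d → ℕ, j t = n → (∀ t' ≠ t, M ∣ j t') → PerfectTiling F (tileBoxN j) := by
  classical
  intro n
  induction n using Nat.strong_induction_on with
  | _ n ih =>
    intro c hc j hjt hjM
    rcases Nat.eq_zero_or_pos n with h0 | h0
    · rw [tileBoxN_eq_empty (l := j) (t := t) (hjt.trans h0)]
      exact perfectTiling_empty F
    · have hex : ∃ a ∈ F, 0 < c a := by
        by_contra hcon
        push_neg at hcon
        have hzero : ∑ i ∈ F, c i * i t = 0 :=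
          Finset.sum_eq_zero fun i hi => by rw [Nat.le_zero.mp (hcon i hi), zero_mul]
        have hn0 : n = 0 := by rw [← hc, hzero]
        exact absurd hn0 h0.ne'
      obtain ⟨a, haF, hca⟩ := hex
      have hat : 0 < a t := hFpos a haF t
      have hle : c a * a t ≤ n := by
        rw [← hc]
        exact Finset.single_le_sum (f := fun i => c i * i t) (fun i _ => Nat.zero_le _) haF
      have haux : a t ≤ c a * a t := Nat.le_mul_of_pos_left _ hca
      have hatn : a t ≤ n := le_trans haux hle
      have haM : ∀ t', a t' ∣ M := by
        intro t'
        have h1 : a t' ∣ ∏ t'', a t'' := Finset.dvd_prod_of_mem _ (Finset.mem_univ t')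
        have h2 : (∏ t'', a t'') ∣ M := hM ▸ Finset.dvd_prod_of_mem _ haF
        exact h1.trans h2
      have hs1 : ∑ i ∈ F.erase a, c i * i t + c a * a t = n := by
        rw [← hc, Finset.sum_erase_add _ _ haF]
      have hs2 : ∑ i ∈ F, (Function.update c a (c a - 1)) i * i t
          = ∑ i ∈ F.erase a, c i * i t + (c a - 1) * a t := by
        rw [← Finset.sum_erase_add _ _ haF, Function.update_self]
        congr 1
        apply Finset.sum_congr rfl
        intro i hi
        rw [Function.update_of_ne (Finset.ne_of_mem_erase hi)]
      have hsub : (c a - 1) * a t = c a * a t - a t := by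
        rw [Nat.sub_mul, one_mul]
      have hcc : ∑ i ∈ F, (Function.update c a (c a - 1)) i * i t = n - a t := by
        rw [hs2, hsub, ← hs1, Nat.add_sub_assoc haux]
      apply perfectTiling_concat F j t (a t) (n - a t)
        (by rw [hjt]; exact (Nat.add_sub_cancel' hatn).symm)
      · apply perfectTiling_grid F a haF (hFpos a haF)
        intro t'
        by_cases ht' : t' = t
        · subst ht'; rw [Function.update_self]
        · rw [Function.update_of_ne ht']
          exact (haM t').trans (hjM t' ht')
      · apply ih (n - a t) (Nat.sub_lt h0 hat) (Function.update c a (c a - 1)) hcc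
        · rw [Function.update_self]
        · intro t' ht'
          rw [Function.update_of_ne ht']
          exact hjM t' ht'

theorem stmt9 (d : ℕ) (F : Finset (Fin d → ℕ))
    (hFpos : ∀ i ∈ F, ∀ t, 0 < i t)
    (t : Fin d) (hgcd : F.gcd (fun i => i t) = 1)
    (M : ℕ) (hM : M = F.prod fun i => ∏ t', i t') :
    ∃ N : ℕ, ∀ j : Fin d → ℕ, N ≤ j t → (∀ t' ≠ t, M ∣ j t') →
      PerfectTiling F (tileBoxN j) := by
  classical
  obtain ⟨N, hN⟩ := my_frobenius F (fun i => i t) (fun i hi => hFpos i hi t) hgcd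
  refine ⟨N, fun j hjt hjM => ?_⟩
  obtain ⟨c, hc⟩ := hN (j t) hjt
  exact main_aux F hFpos t M hM (j t) c hc j rfl hjM
end

section
/- Let H be a finite connected non-bipartite graph, (v₀,v₁) an edge of H, and for n ≥ 1 let C_n^{(v₀,v₁)} be the set of graph homomorphisms a : F_n → H with a_i = v_{parity(i)} for all i in the boundary shell F_n \ F_{n−1}. Then there exists N ∈ ℕ (depending only on H) such that for any edges (v₀,v₁), (w₀,w₁) of H, any n ∈ ℕ, any k ≥ N, and any a ∈ C_n^{(v₀,v₁)}, there exists ã ∈ C_{n+k}^{(w₀,w₁)} with ã|_{F_n} = a. -/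
/-!
Since `H` is connected and has an odd closed walk, there is `N` such that any two vertices
of `H` are joined by walks of every length `≥ N`. For `i ∈ ℤ^d` let `ℓ i` be the least integer
`≥ ‖i‖∞` with the parity of the coordinate sum of `i`; it changes by exactly `±1` along every
edge of `ℤ^d`. Take a walk `c₀, c₁, …, c_{k+1}` in `H` with `(c₀, c₁) = (v_n, v_{n+1})` and
`(c_k, c_{k+1}) = (w_{n+k}, w_{n+k+1})` (indices mod 2), and put `ã i = c_{ℓ i - n}` outside `F_n`.
On the shells of radius `n` and `n + k`, `ℓ i - n` takes the values `{0, 1}` and `{k, k + 1}`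
according to the parity of `i`, so `ã` agrees with `a` on `F_n` and has the prescribed
boundary values.
-/

section Walks

variable {V : Type*} {Adj : V → V → Prop}

def HasWalk (Adj : V → V → Prop) (m : ℕ) (u v : V) : Prop :=
  ∃ p : ℕ → V, p 0 = u ∧ p m = v ∧ ∀ i < m, Adj (p i) (p (i + 1))

lemma hasWalk_zero {u v : V} : HasWalk Adj 0 u v ↔ u = v :=
  ⟨fun ⟨_, h0, h1, _⟩ => h0.symm.trans h1, fun h => ⟨fun _ => u, rfl, h, by omega⟩⟩

lemma hasWalk_succ {m : ℕ} {u w : V} :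
    HasWalk Adj (m + 1) u w ↔ ∃ v, Adj u v ∧ HasWalk Adj m v w := by
  constructor
  · rintro ⟨p, h0, hm, hp⟩
    exact ⟨p 1, h0 ▸ hp 0 m.succ_pos, fun i => p (i + 1), rfl, hm,
      fun i hi => hp (i + 1) (by omega)⟩
  · rintro ⟨v, huv, p, h0, hm, hp⟩
    refine ⟨fun i => if i = 0 then u else p (i - 1), rfl, by simpa using hm, ?_⟩
    rintro (_ | i) hi
    · simpa [h0] using huv
    · simpa using hp i (by omega)

lemma HasWalk.append {m₁ m₂ : ℕ} {u v w : V} (h₁ : HasWalk Adj m₁ u v)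
    (h₂ : HasWalk Adj m₂ v w) : HasWalk Adj (m₁ + m₂) u w := by
  induction m₁ generalizing u with
  | zero => rwa [hasWalk_zero.1 h₁, zero_add]
  | succ m ih =>
    obtain ⟨x, hux, hx⟩ := hasWalk_succ.1 h₁
    rw [Nat.add_right_comm]
    exact hasWalk_succ.2 ⟨x, hux, ih hx⟩

lemma hasWalk_two_mul (hsymm : ∀ u v, Adj u v → Adj v u) {u x : V} (hux : Adj u x) (s : ℕ) :
    HasWalk Adj (2 * s) u u := by
  induction s with
  | zero => exact hasWalk_zero.2 rfl
  | succ s ih =>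
    exact ih.append
      (hasWalk_succ.2 ⟨x, hux, hasWalk_succ.2 ⟨u, hsymm _ _ hux, hasWalk_zero.2 rfl⟩⟩)

theorem exists_forall_hasWalk_of_le [Finite V] (hsymm : ∀ u v, Adj u v → Adj v u)
    (hconn : ∀ u v, ∃ m, HasWalk Adj m u v) (hodd : ∃ v m, Odd m ∧ HasWalk Adj m v v) :
    ∃ N, ∀ u v m, N ≤ m → HasWalk Adj m u v := by
  obtain ⟨z, _, ⟨t, rfl⟩, hcyc⟩ := hodd
  choose len hlen using hconn
  obtain ⟨L, hL⟩ := (Set.finite_range fun p : V × V => len p.1 p.2).bddAbove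
  have hlenL : ∀ u v, len u v ≤ L := fun u v => hL ⟨(u, v), rfl⟩
  refine ⟨2 * L + 2 * t + 1, fun u v m hm => ?_⟩
  have hcyc' : HasWalk Adj (len u z + 2 * t + 1) u z := (hlen u z).append hcyc
  obtain ⟨x, hux, -⟩ := hasWalk_succ.1 hcyc'
  have := hlenL u z
  have := hlenL z v
  rcases Nat.even_or_odd (m - (len u z + len z v)) with ⟨s, hs⟩ | ⟨s, hs⟩
  · convert (hasWalk_two_mul hsymm hux s).append ((hlen u z).append (hlen z v)) using 1
    omega
  · convert (hasWalk_two_mul hsymm hux (s - t)).append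
      ((hlen u z).append (hcyc.append (hlen z v))) using 1
    omega

lemma exists_walk_through_edges {x₀ x₁ y₀ y₁ : V} {m : ℕ} (hx : Adj x₀ x₁) (hy : Adj y₀ y₁)
    (h : HasWalk Adj m x₁ y₀) :
    ∃ c : ℕ → V, (∀ l ≤ m + 1, Adj (c l) (c (l + 1))) ∧
      c 0 = x₀ ∧ c 1 = x₁ ∧ c (m + 1) = y₀ ∧ c (m + 2) = y₁ := by
  obtain ⟨p, hp0, hpm, hp⟩ := h
  let c : ℕ → V := fun l => if l = 0 then x₀ else if l ≤ m + 1 then p (l - 1) else y₁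
  refine ⟨c, fun l hl => ?_, by simp [c], by simp [c, hp0], by simp [c, hpm], by simp [c]⟩
  rcases l with _ | l
  · simpa [c, hp0] using hx
  · rcases (show l < m ∨ l = m by omega) with hlm | rfl
    · simpa [c, show l + 1 ≤ m + 1 by omega, show l + 2 ≤ m + 1 by omega] using hp l hlm
    · simpa [c, hpm] using hy

def alternating (v₀ v₁ : V) (s : ℤ) : V := if s % 2 = 0 then v₀ else v₁

lemma alternating_congr (v₀ v₁ : V) {s s' : ℤ} (h : s % 2 = s' % 2) :
    alternating v₀ v₁ s = alternating v₀ v₁ s' := by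
  rw [alternating, alternating, h]

lemma alternating_adj (hsymm : ∀ u v, Adj u v → Adj v u) {v₀ v₁ : V} (h : Adj v₀ v₁) (s : ℤ) :
    Adj (alternating v₀ v₁ s) (alternating v₀ v₁ (s + 1)) := by
  unfold alternating
  rcases Int.emod_two_eq s with hs | hs
  · rw [if_pos hs, if_neg (by omega)]
    exact h
  · rw [if_neg (by omega), if_pos (by omega)]
    exact hsymm _ _ h

end Walks

section Box

variable {d : ℕ} {i j : Fin d → ℤ}

def supRadius (i : Fin d → ℤ) : ℕ := Finset.univ.sup fun t => (i t).natAbs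

lemma mem_boxF_iff {n : ℕ} : i ∈ boxF n ↔ supRadius i ≤ n := by
  simp only [supRadius, Finset.sup_le_iff, Finset.mem_univ, true_imp_iff]
  exact forall_congr' fun t => by rw [Int.abs_eq_natAbs, Nat.cast_le]

lemma mem_boxF_sdiff_iff {n : ℕ} (hn : 1 ≤ n) :
    i ∈ boxF n \ boxF (n - 1) ↔ supRadius i = n := by
  rw [Set.mem_sdiff, mem_boxF_iff, mem_boxF_iff]
  omega

lemma adjZ.symm (h : adjZ i j) : adjZ j i := by
  rw [adjZ, ← h]
  exact Finset.sum_congr rfl fun t _ => abs_sub_comm _ _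

lemma adjZ.supRadius_le (h : adjZ i j) : supRadius j ≤ supRadius i + 1 := by
  refine Finset.sup_le fun t _ => ?_
  have hit : |i t - j t| ≤ 1 :=
    h ▸ Finset.single_le_sum (f := fun s => |i s - j s|) (fun s _ => abs_nonneg _)
      (Finset.mem_univ t)
  have hi : (i t).natAbs ≤ supRadius i :=
    Finset.le_sup (f := fun t => (i t).natAbs) (Finset.mem_univ t)
  rw [abs_le] at hit
  omega

lemma adjZ.odd_sum_sub (h : adjZ i j) : Odd ((∑ t, i t) - ∑ t, j t) := by
  have heven : Even (∑ t, (|i t - j t| - (i t - j t))) :=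
    Finset.even_sum _ fun t _ => by
      rcases abs_choice (i t - j t) with habs | habs <;> rw [habs]
      · simp
      · exact ⟨j t - i t, by ring⟩
  rw [Finset.sum_sub_distrib, h, Finset.sum_sub_distrib] at heven
  obtain ⟨r, hr⟩ := heven
  exact ⟨-r, by omega⟩

def parityLevel (i : Fin d → ℤ) : ℕ :=
  if ((supRadius i : ℤ) + ∑ t, i t) % 2 = 0 then supRadius i else supRadius i + 1

lemma parityLevel_spec (i : Fin d → ℤ) :
    supRadius i ≤ parityLevel i ∧ parityLevel i ≤ supRadius i + 1 ∧
      (parityLevel i : ℤ) % 2 = (∑ t, i t) % 2 := by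
  unfold parityLevel
  split_ifs <;> push_cast <;> omega

lemma adjZ.parityLevel_eq (h : adjZ i j) :
    parityLevel j = parityLevel i + 1 ∨ parityLevel i = parityLevel j + 1 := by
  have := h.supRadius_le
  have := h.symm.supRadius_le
  obtain ⟨r, hr⟩ := h.odd_sum_sub
  have := parityLevel_spec i
  have := parityLevel_spec j
  omega

variable {V : Type*} {Adj : V → V → Prop}

lemma adj_comp_parityLevel (hsymm : ∀ u v, Adj u v → Adj v u) {c : ℕ → V} {n k : ℕ}
    (hc : ∀ l ≤ k, Adj (c l) (c (l + 1))) (h : adjZ i j)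
    (hi : n ≤ supRadius i) (hj : n ≤ supRadius j)
    (hi' : supRadius i ≤ n + k) (hj' : supRadius j ≤ n + k) :
    Adj (c (parityLevel i - n)) (c (parityLevel j - n)) := by
  have := parityLevel_spec i
  have := parityLevel_spec j
  rcases h.parityLevel_eq with hl | hl
  · rw [show parityLevel j - n = parityLevel i - n + 1 by omega]
    exact hc _ (by omega)
  · rw [show parityLevel i - n = parityLevel j - n + 1 by omega]
    exact hsymm _ _ (hc _ (by omega))

lemma comp_parityLevel_sub_eq_alternating {c : ℕ → V} {v₀ v₁ : V} {r : ℕ}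
    (h0 : c 0 = alternating v₀ v₁ r) (h1 : c 1 = alternating v₀ v₁ (r + 1))
    (hi : supRadius i = r) : c (parityLevel i - r) = alternating v₀ v₁ (∑ t, i t) := by
  obtain ⟨hlo, hhi, hpar⟩ := parityLevel_spec i
  rcases (show parityLevel i - r = 0 ∨ parityLevel i - r = 1 by omega) with hl | hl
  · rw [hl, h0]
    exact alternating_congr v₀ v₁ (by omega)
  · rw [hl, h1]
    exact alternating_congr v₀ v₁ (by omega)

lemma adj_piecewise {a f : (Fin d → ℤ) → V} {n R : ℕ}
    (ha : ∀ i ∈ boxF n, ∀ j ∈ boxF n, adjZ i j → Adj (a i) (a j))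
    (hf : ∀ i j, adjZ i j → n ≤ supRadius i → n ≤ supRadius j →
      supRadius i ≤ R → supRadius j ≤ R → Adj (f i) (f j))
    (hfa : ∀ i, supRadius i = n → f i = a i) :
    ∀ i ∈ boxF R, ∀ j ∈ boxF R, adjZ i j →
      Adj (if supRadius i ≤ n then a i else f i) (if supRadius j ≤ n then a j else f j) := by
  intro i hi j hj h
  rw [mem_boxF_iff] at hi hj
  have := h.supRadius_le
  have := h.symm.supRadius_le
  split_ifs with hin hjn hjn
  · exact ha i (mem_boxF_iff.2 hin) j (mem_boxF_iff.2 hjn) h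
  · rw [← hfa i (by omega)]
    exact hf i j h (by omega) (by omega) hi hj
  · rw [← hfa j (by omega)]
    exact hf i j h (by omega) (by omega) hi hj
  · exact hf i j h (by omega) (by omega) hi hj

end Box

theorem stmt18 {V : Type*} [Fintype V] (Adj : V → V → Prop)
    (hsymm : ∀ u v, Adj u v → Adj v u)
    -- H is connected:
    (hconn : ∀ u v : V, ∃ n : ℕ, ∃ p : ℕ → V,
      p 0 = u ∧ p n = v ∧ ∀ i < n, Adj (p i) (p (i + 1)))
    -- H is non-bipartite (has a closed walk of odd length):
    (hodd : ∃ v : V, ∃ n : ℕ, Odd n ∧ ∃ p : ℕ → V,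
      p 0 = v ∧ p n = v ∧ ∀ i < n, Adj (p i) (p (i + 1)))
    (d : ℕ) :
    ∃ N : ℕ, ∀ v₀ v₁ w₀ w₁ : V, Adj v₀ v₁ → Adj w₀ w₁ →
      ∀ n : ℕ, 1 ≤ n → ∀ k : ℕ, N ≤ k →
      ∀ a : (Fin d → ℤ) → V,
        (∀ i ∈ boxF (d := d) n, ∀ j ∈ boxF n, adjZ i j → Adj (a i) (a j)) →
        (∀ i ∈ boxF (d := d) n \ boxF (n - 1),
          a i = if (∑ t, i t) % 2 = 0 then v₀ else v₁) →
        ∃ b : (Fin d → ℤ) → V,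
          (∀ i ∈ boxF (d := d) (n + k), ∀ j ∈ boxF (n + k), adjZ i j → Adj (b i) (b j)) ∧
          (∀ i ∈ boxF (d := d) n, b i = a i) ∧
          (∀ i ∈ boxF (d := d) (n + k) \ boxF (n + k - 1),
            b i = if (∑ t, i t) % 2 = 0 then w₀ else w₁) := by
  obtain ⟨N, hN⟩ := exists_forall_hasWalk_of_le hsymm hconn hodd
  refine ⟨N + 1, fun v₀ v₁ w₀ w₁ hv hw n hn k hk a ha hbd => ?_⟩
  obtain ⟨m, rfl⟩ : ∃ m, k = m + 1 := ⟨k - 1, by omega⟩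
  obtain ⟨c, hc, hc0, hc1, hcm, hcm1⟩ := exists_walk_through_edges
    (alternating_adj hsymm hv n) (alternating_adj hsymm hw (n + (m + 1) : ℕ))
    (hN _ _ m (by omega))
  refine ⟨fun i => if supRadius i ≤ n then a i else c (parityLevel i - n),
    adj_piecewise ha (fun i j h hi hj hi' hj' => adj_comp_parityLevel hsymm hc h hi hj hi' hj')
      (fun i hi => ?_),
    fun i hi => if_pos (mem_boxF_iff.1 hi), fun i hi => ?_⟩
  · rw [hbd i ((mem_boxF_sdiff_iff hn).2 hi)]
    exact comp_parityLevel_sub_eq_alternating hc0 hc1 hi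
  · rw [mem_boxF_sdiff_iff (by omega)] at hi
    have := (parityLevel_spec i).1
    change ite _ _ _ = alternating w₀ w₁ _
    rw [if_neg (show ¬supRadius i ≤ n by omega),
      show parityLevel i - n = m + 1 + (parityLevel i - (n + (m + 1))) by omega]
    exact comp_parityLevel_sub_eq_alternating (c := fun l => c (m + 1 + l)) hcm hcm1 hi
end
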